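/- The generalized entanglement of purification is monotone under discarding subsystems: if A_i' = A_i ⊗ E_i for each i, then E_p(A_1,…,A_n) ≤ E_p(A_1',…,A_n'). -/

import Mathlib

open Matrix ComplexOrder
open scoped ComplexOrder

noncomputable section
open Classical

variable {ι : Type*} [Fintype ι] [DecidableEq ι]
variable {d : ι → Type*} [∀ i, Fintype (d i)] [∀ i, DecidableEq (d i)]

/-- Merge an assignment on the parties in `T` with one on the parties outside `T`. -/
def merge (T : Finset ι) (d : ι → Type*) (a : ∀ i : {j // j ∈ T}, d i.1)
    (b : ∀ i : {j // j ∉ T}, d i.1) : ∀ i, d i :=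
  fun i => if h : i ∈ T then a ⟨i, h⟩ else b ⟨i, h⟩

/-- The marginal (partial trace) of a multipartite operator on the set `T` of parties. -/
def marg (T : Finset ι) (ρ : Matrix (∀ i, d i) (∀ i, d i) ℂ) :
    Matrix (∀ i : {j // j ∈ T}, d i.1) (∀ i : {j // j ∈ T}, d i.1) ℂ :=
  fun a b => ∑ f : ∀ i : {j // j ∉ T}, d i.1, ρ (merge T d a f) (merge T d b f)

/-- Von Neumann entropy of a (hermitian) matrix via its eigenvalues,
`S(ρ) = −Σ λ_i log λ_i`. -/
def vN {m : Type*} [Fintype m] [DecidableEq m] (A : Matrix m m ℂ) : ℝ :=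
  if h : A.IsHermitian then ∑ i, Real.negMulLog (h.eigenvalues i) else 0

/-- Matrix logarithm of a hermitian matrix via the spectral decomposition. -/
def mlog {m : Type*} [Fintype m] [DecidableEq m] (A : Matrix m m ℂ) : Matrix m m ℂ :=
  if h : A.IsHermitian then
    (h.eigenvectorUnitary : Matrix m m ℂ) *
      Matrix.diagonal (fun i => (Real.log (h.eigenvalues i) : ℂ)) *
      (star h.eigenvectorUnitary : Matrix m m ℂ)
  else 0

/-- Quantum relative entropy `D(ρ‖σ) = Tr ρ (log ρ − log σ)`. -/
def relEnt {m : Type*} [Fintype m] [DecidableEq m] (ρ σ : Matrix m m ℂ) : ℝ :=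
  ((ρ * (mlog ρ - mlog σ)).trace).re


/-- `ψ` (a vector on `⊗_i (A_i ⊗ R_i)`) is a purification of the `n`-partite state `ρ`
on `⊗_i A_i`, with purifying registers `R_i` attached to the respective parties. -/
def IsPurification (ι : Type*) [Fintype ι] [DecidableEq ι] (d R : ι → Type*)
    [∀ i, Fintype (d i)] [∀ i, DecidableEq (d i)]
    [∀ i, Fintype (R i)] [∀ i, DecidableEq (R i)]
    (ρ : Matrix (∀ i, d i) (∀ i, d i) ℂ) (ψ : (∀ i, d i × R i) → ℂ) : Prop :=
  (∑ f, Complex.normSq (ψ f) = 1) ∧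
    ∀ a b, (∑ e : ∀ i, R i,
        ψ (fun i => (a i, e i)) * (starRingEnd ℂ) (ψ (fun i => (b i, e i)))) = ρ a b

/-- The value `Σ_i S(A_i R_i)` for a given purification. -/
def EpTerm (ι : Type*) [Fintype ι] [DecidableEq ι] (d R : ι → Type*)
    [∀ i, Fintype (d i)] [∀ i, DecidableEq (d i)]
    [∀ i, Fintype (R i)] [∀ i, DecidableEq (R i)]
    (ψ : (∀ i, d i × R i) → ℂ) : ℝ :=
  ∑ i : ι, vN (marg {i} (fun f g => ψ f * (starRingEnd ℂ) (ψ g)))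

/-- Generalized entanglement of purification
`E_p(A_1,…,A_n) = (1/2) inf Σ_i S(A_iR_i)`, the infimum running over all purifications
and all partitions of the purifying system into registers `R_1,…,R_n`. -/
def Ep (ι : Type*) [Fintype ι] [DecidableEq ι] (d : ι → Type)
    [∀ i, Fintype (d i)] [∀ i, DecidableEq (d i)]
    (ρ : Matrix (∀ i, d i) (∀ i, d i) ℂ) : ℝ :=
  (1 / 2) * sInf { x | ∃ (R : ι → Type) (fR : ∀ i, Fintype (R i))
    (dR : ∀ i, DecidableEq (R i)) (ψ : (∀ i, d i × R i) → ℂ),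
      @IsPurification ι _ _ d R _ _ fR dR ρ ψ ∧ x = @EpTerm ι _ _ d R _ _ fR dR ψ }


-- ### Auxiliary lemmas ### --
section CharpolyAux
open Polynomial

lemma charpoly_conj_units {n : Type*} [Fintype n] [DecidableEq n]
    (P A Q : Matrix n n ℂ) (hPQ : P * Q = 1) (hQP : Q * P = 1) :
    (P * A * Q).charpoly = A.charpoly := by
  have hmap : (C : ℂ →+* ℂ[X]).mapMatrix (P * A * Q)
      = C.mapMatrix P * C.mapMatrix A * C.mapMatrix Q := by simp
  have hch : charmatrix (P * A * Q)
      = C.mapMatrix P * charmatrix A * C.mapMatrix Q := by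
    rw [charmatrix, charmatrix, hmap, Matrix.mul_sub, Matrix.sub_mul]
    congr 1
    rw [Matrix.mul_assoc]
    rw [scalar_commute (X : ℂ[X]) (fun r => (Commute.all _ _)) _]
    rw [← Matrix.mul_assoc, ← _root_.map_mul (C.mapMatrix), hPQ]
    simp
  rw [Matrix.charpoly, hch, det_mul, det_mul, mul_comm, ← mul_assoc, ← det_mul,
    ← _root_.map_mul (C.mapMatrix), hQP]
  simp [Matrix.charpoly]

lemma charpoly_hermitian {n : Type*} [Fintype n] [DecidableEq n]
    {A : Matrix n n ℂ} (h : A.IsHermitian) :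
    A.charpoly = ∏ i, (X - C (h.eigenvalues i : ℂ)) := by
  have hs := h.spectral_theorem
  rw [Unitary.conjStarAlgAut_apply] at hs
  have h1 : (h.eigenvectorUnitary : Matrix n n ℂ) * (star h.eigenvectorUnitary : Matrix n n ℂ) = 1 := by
    simpa using h.eigenvectorUnitary.2.2
  have h2 : (star h.eigenvectorUnitary : Matrix n n ℂ) * (h.eigenvectorUnitary : Matrix n n ℂ) = 1 := by
    simpa using h.eigenvectorUnitary.2.1
  calc A.charpoly
      = ((h.eigenvectorUnitary : Matrix n n ℂ) *
          diagonal (RCLike.ofReal ∘ h.eigenvalues) *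
          (star h.eigenvectorUnitary : Matrix n n ℂ)).charpoly := by rw [← hs]
    _ = (diagonal (RCLike.ofReal ∘ h.eigenvalues) : Matrix n n ℂ).charpoly :=
        charpoly_conj_units _ _ _ h1 h2
    _ = ∏ i, (X - C (h.eigenvalues i : ℂ)) := by
        rw [Matrix.charpoly, charmatrix]
        have : (scalar n (X : ℂ[X])) - (C : ℂ →+* ℂ[X]).mapMatrix
            (diagonal (RCLike.ofReal ∘ h.eigenvalues)) =
            diagonal (fun i => (X - C (h.eigenvalues i : ℂ))) := by
          rw [RingHom.mapMatrix_apply, scalar_apply, diagonal_map (by simp), ← diagonal_sub]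
          rfl
        rw [this, det_diagonal]

lemma roots_charpoly_hermitian {n : Type*} [Fintype n] [DecidableEq n]
    {A : Matrix n n ℂ} (h : A.IsHermitian) :
    A.charpoly.roots = Finset.univ.val.map (fun i => (h.eigenvalues i : ℂ)) := by
  rw [charpoly_hermitian h]
  have : (∏ i, (X - C (h.eigenvalues i : ℂ)))
      = ((Finset.univ.val.map (fun i => (h.eigenvalues i : ℂ))).map
          (fun a => X - C a)).prod := by
    rw [Multiset.map_map]; rfl
  rw [this, roots_multiset_prod_X_sub_C]


lemma vN_eq_roots {n : Type*} [Fintype n] [DecidableEq n]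
    {A : Matrix n n ℂ} (h : A.IsHermitian) :
    vN A = (A.charpoly.roots.map (fun z => Real.negMulLog z.re)).sum := by
  rw [vN, dif_pos h, roots_charpoly_hermitian h, Multiset.map_map]
  rfl

lemma isHermitian_submatrix {m n : Type*} [Fintype m] [DecidableEq m]
    [Fintype n] [DecidableEq n] (e : m ≃ n) {A : Matrix n n ℂ}
    (h : A.IsHermitian) : (A.submatrix e e).IsHermitian := by
  ext i j
  simpa using congrFun (congrFun h (e i)) (e j)

lemma vN_submatrix {m n : Type*} [Fintype m] [DecidableEq m]
    [Fintype n] [DecidableEq n] (e : m ≃ n) (A : Matrix n n ℂ) :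
    vN (A.submatrix e e) = vN A := by
  by_cases h : A.IsHermitian
  · rw [vN_eq_roots (isHermitian_submatrix e h), vN_eq_roots h]
    have : A.submatrix e e = (Matrix.reindex e.symm e.symm) A := rfl
    rw [this, Matrix.charpoly_reindex]
  · have h' : ¬ (A.submatrix e e).IsHermitian := by
      intro h'
      exact h (by simpa using isHermitian_submatrix e.symm h')
    rw [vN, vN, dif_neg h, dif_neg h']


end CharpolyAux

/-- Pi of products is a product of Pis. -/
def piProdEquiv {ι : Type*} (α β : ι → Type*) :
    (∀ i, α i × β i) ≃ (∀ i, α i) × (∀ i, β i) where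
  toFun f := (fun i => (f i).1, fun i => (f i).2)
  invFun p := fun i => (p.1 i, p.2 i)
  left_inv f := rfl
  right_inv p := rfl

/-- Merging is a bijection. -/
def mergeEquiv (T : Finset ι) (d : ι → Type*) :
    ((∀ i : {j // j ∈ T}, d i.1) × (∀ i : {j // j ∉ T}, d i.1)) ≃ (∀ i, d i) where
  toFun p := merge T d p.1 p.2
  invFun g := (fun i => g i.1, fun i => g i.1)
  left_inv p := by
    ext i
    · simp [merge, i.2]
    · simp [merge, i.2]
  right_inv g := by
    funext i
    by_cases h : i ∈ T <;> simp [merge, h]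

lemma sum_eigenvalues_eq_trace {n : Type*} [Fintype n] [DecidableEq n]
    {A : Matrix n n ℂ} (h : A.IsHermitian) :
    (∑ i, (h.eigenvalues i : ℂ)) = A.trace := by
  conv_rhs => rw [h.spectral_theorem, Unitary.conjStarAlgAut_apply]
  rw [trace_mul_cycle]
  have h2 : (star h.eigenvectorUnitary : Matrix n n ℂ) *
      (h.eigenvectorUnitary : Matrix n n ℂ) = 1 := by
    simpa using h.eigenvectorUnitary.2.1
  rw [h2, one_mul, trace_diagonal]
  rfl

lemma vN_nonneg_of_psd_trace_one {n : Type*} [Fintype n] [DecidableEq n]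
    {A : Matrix n n ℂ} (hA : A.PosSemidef) (htr : A.trace = 1) : 0 ≤ vN A := by
  have h := hA.1
  rw [vN, dif_pos h]
  have hnn : ∀ i, 0 ≤ h.eigenvalues i := hA.eigenvalues_nonneg
  have hsum : (∑ i, h.eigenvalues i) = 1 := by
    have := sum_eigenvalues_eq_trace h
    rw [htr] at this
    exact_mod_cast this
  refine Finset.sum_nonneg fun i _ => Real.negMulLog_nonneg (hnn i) ?_
  calc h.eigenvalues i ≤ ∑ j, h.eigenvalues j :=
        Finset.single_le_sum (fun j _ => hnn j) (Finset.mem_univ i)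
    _ = 1 := hsum

lemma marg_psd (T : Finset ι) (ψ : (∀ i, d i) → ℂ) :
    (marg T (fun f g => ψ f * (starRingEnd ℂ) (ψ g))).PosSemidef := by
  rw [posSemidef_iff_dotProduct_mulVec]
  constructor
  · ext a b
    simp only [conjTranspose_apply, marg, star_sum, star_mul']
    exact Finset.sum_congr rfl fun f _ => by
      simp [Complex.star_def, mul_comm]
  · intro x
    set z : (∀ i : {j // j ∉ T}, d i.1) → ℂ :=
      fun f => ∑ a, star (x a) * ψ (merge T d a f) with hzdef
    have hz : star x ⬝ᵥ ((marg T (fun f g => ψ f * (starRingEnd ℂ) (ψ g))) *ᵥ x)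
        = ∑ f, z f * (starRingEnd ℂ) (z f) := by
      calc star x ⬝ᵥ ((marg T (fun f g => ψ f * (starRingEnd ℂ) (ψ g))) *ᵥ x)
          = ∑ a, ∑ b, ∑ f, star (x a) * ψ (merge T d a f) *
              (x b * (starRingEnd ℂ) (ψ (merge T d b f))) := by
            simp only [dotProduct, mulVec, dotProduct, marg, Finset.mul_sum, Finset.sum_mul,
              Pi.star_apply]
            refine Finset.sum_congr rfl fun a _ => Finset.sum_congr rfl fun b _ =>
              Finset.sum_congr rfl fun f _ => by ring
        _ = ∑ a, ∑ f, ∑ b, star (x a) * ψ (merge T d a f) *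
              (x b * (starRingEnd ℂ) (ψ (merge T d b f))) :=
            Finset.sum_congr rfl fun a _ => Finset.sum_comm
        _ = ∑ f, ∑ a, ∑ b, star (x a) * ψ (merge T d a f) *
              (x b * (starRingEnd ℂ) (ψ (merge T d b f))) := Finset.sum_comm
        _ = ∑ f, z f * (starRingEnd ℂ) (z f) := by
            refine Finset.sum_congr rfl fun f _ => ?_
            rw [hzdef]
            simp only [map_sum, _root_.map_mul, Finset.sum_mul, Finset.mul_sum,
              Complex.star_def, Complex.conj_conj]
            exact Finset.sum_comm
    rw [hz]
    refine Finset.sum_nonneg fun f _ => ?_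
    rw [Complex.mul_conj]
    exact Complex.zero_le_real.mpr (Complex.normSq_nonneg _)

lemma marg_trace (T : Finset ι) (ψ : (∀ i, d i) → ℂ)
    (hψ : ∑ f, Complex.normSq (ψ f) = 1) :
    (marg T (fun f g => ψ f * (starRingEnd ℂ) (ψ g))).trace = 1 := by
  have h1 : (marg T (fun f g => ψ f * (starRingEnd ℂ) (ψ g))).trace
      = ∑ p : ((∀ i : {j // j ∈ T}, d i.1) × (∀ i : {j // j ∉ T}, d i.1)),
          (Complex.normSq (ψ (merge T d p.1 p.2)) : ℂ) := by
    rw [Matrix.trace]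
    simp only [diag, marg]
    rw [Fintype.sum_prod_type]
    refine Finset.sum_congr rfl fun a _ => Finset.sum_congr rfl fun f _ => ?_
    rw [Complex.mul_conj]
  have h2 : (∑ p : ((∀ i : {j // j ∈ T}, d i.1) × (∀ i : {j // j ∉ T}, d i.1)),
      Complex.normSq (ψ (merge T d p.1 p.2))) = ∑ f, Complex.normSq (ψ f) :=
    Fintype.sum_equiv (mergeEquiv T d) _ _ (fun p => rfl)
  rw [h1, ← Complex.ofReal_sum, h2, hψ, Complex.ofReal_one]

lemma normalization_of_cond2 {ι : Type*} [Fintype ι] [DecidableEq ι]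
    {d R : ι → Type*} [∀ i, Fintype (d i)] [∀ i, DecidableEq (d i)]
    [∀ i, Fintype (R i)] [∀ i, DecidableEq (R i)]
    {ρ : Matrix (∀ i, d i) (∀ i, d i) ℂ} {ψ : (∀ i, d i × R i) → ℂ}
    (htr : ρ.trace = 1)
    (h2 : ∀ a b, (∑ e : ∀ i, R i,
        ψ (fun i => (a i, e i)) * (starRingEnd ℂ) (ψ (fun i => (b i, e i)))) = ρ a b) :
    ∑ f, Complex.normSq (ψ f) = 1 := by
  have key : ((∑ f, Complex.normSq (ψ f) : ℝ) : ℂ) = ρ.trace := by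
    rw [Complex.ofReal_sum]
    have h3 : ∀ f, (Complex.normSq (ψ f) : ℂ) = ψ f * (starRingEnd ℂ) (ψ f) :=
      fun f => (Complex.mul_conj _).symm
    simp_rw [h3]
    rw [Fintype.sum_equiv (piProdEquiv d R)
      (fun f => ψ f * (starRingEnd ℂ) (ψ f)) (fun p => ψ (fun i => (p.1 i, p.2 i)) *
        (starRingEnd ℂ) (ψ (fun i => (p.1 i, p.2 i)))) (fun p => rfl)]
    rw [Fintype.sum_prod_type]
    rw [Matrix.trace]
    exact Finset.sum_congr rfl fun a _ => h2 a a
  have := key.trans htr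
  exact_mod_cast this


lemma exists_purification (ι : Type) [Fintype ι] [DecidableEq ι]
    (D : ι → Type) [∀ i, Fintype (D i)] [∀ i, DecidableEq (D i)]
    (ρ : Matrix (∀ i, D i) (∀ i, D i) ℂ) (hρ : ρ.PosSemidef) (htr : ρ.trace = 1) :
    ∃ (R : ι → Type) (fR : ∀ i, Fintype (R i)) (dR : ∀ i, DecidableEq (R i))
      (ψ : (∀ i, D i × R i) → ℂ), @IsPurification ι _ _ D R _ _ fR dR ρ ψ := by
  classical
  rcases isEmpty_or_nonempty ι with hι | hι
  · haveI := hι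
    refine ⟨fun _ => PUnit, fun _ => inferInstance, fun _ => inferInstance,
      fun _ => 1, ?_, ?_⟩
    · haveI : Unique (∀ i, D i × PUnit) := ⟨⟨fun i => hι.elim i⟩, fun f => funext fun i => hι.elim i⟩
      simp
    · intro a b
      haveI : Unique (∀ i, D i) := ⟨⟨fun i => hι.elim i⟩, fun f => funext fun i => hι.elim i⟩
      haveI : Unique (∀ i, PUnit.{1}) := ⟨⟨fun _ => PUnit.unit⟩, fun f => funext fun i => hι.elim i⟩
      have hab : a = b := Subsingleton.elim a b
      have : ρ a b = 1 := by
        rw [hab]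
        have : ρ.trace = ρ b b := by
          rw [Matrix.trace]
          rw [Fintype.sum_unique (fun x => ρ.diag x)]
          congr 1 <;> exact Subsingleton.elim _ _
        rw [← this, htr]
      rw [this]
      rw [Fintype.sum_unique]
      simp
  · obtain ⟨i₀⟩ := hι
    set R : ι → Type := fun i => PLift (i = i₀) → (∀ j, D j) with hR
    have h := hρ.1
    set lam := h.eigenvalues with hlam
    set U : Matrix (∀ j, D j) (∀ j, D j) ℂ := (h.eigenvectorUnitary : Matrix (∀ j, D j) (∀ j, D j) ℂ) with hU
    set ψ : (∀ i, D i × R i) → ℂ :=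
      fun f => (Real.sqrt (lam ((f i₀).2 ⟨rfl⟩)) : ℂ) * U (fun j => (f j).1) ((f i₀).2 ⟨rfl⟩)
      with hψ
    have φbij : Function.Bijective (fun (y : ∀ j, D j) => (fun i _ => y : ∀ i, R i)) := by
      constructor
      · intro y y' hyy
        exact congrFun (congrFun hyy i₀) ⟨rfl⟩
      · intro e
        refine ⟨e i₀ ⟨rfl⟩, ?_⟩
        funext i hp
        rcases hp with ⟨hp⟩
        subst hp
        rfl
    have cond2 : ∀ a b, (∑ e : ∀ i, R i,
        ψ (fun i => (a i, e i)) * (starRingEnd ℂ) (ψ (fun i => (b i, e i)))) = ρ a b := by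
      intro a b
      have hsum : (∑ e : ∀ i, R i,
          ψ (fun i => (a i, e i)) * (starRingEnd ℂ) (ψ (fun i => (b i, e i))))
          = ∑ y : ∀ j, D j, ((Real.sqrt (lam y) : ℂ) * U a y) *
              (starRingEnd ℂ) ((Real.sqrt (lam y) : ℂ) * U b y) :=
        (Fintype.sum_bijective _ φbij _ _ (fun y => rfl)).symm
      rw [hsum]
      have hρab : ρ a b = ∑ y : ∀ j, D j, U a y * (lam y : ℂ) * (starRingEnd ℂ) (U b y) := by
        conv_lhs => rw [h.spectral_theorem, Unitary.conjStarAlgAut_apply]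
        rw [Matrix.mul_apply]
        refine Finset.sum_congr rfl fun y _ => ?_
        rw [Matrix.mul_diagonal]
        simp [Matrix.conjTranspose_apply, hU]
        try ring
        exact Or.inl (Or.inl rfl)
      rw [hρab]
      refine Finset.sum_congr rfl fun y _ => ?_
      rw [_root_.map_mul]
      have : (starRingEnd ℂ) ((Real.sqrt (lam y) : ℂ)) = (Real.sqrt (lam y) : ℂ) :=
        Complex.conj_ofReal _
      rw [this]
      have hs : ((Real.sqrt (lam y) : ℂ)) * ((Real.sqrt (lam y) : ℂ)) = (lam y : ℂ) := by
        rw [← Complex.ofReal_mul, Real.mul_self_sqrt (hρ.eigenvalues_nonneg y)]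
      calc (Real.sqrt (lam y) : ℂ) * U a y * ((Real.sqrt (lam y) : ℂ) * (starRingEnd ℂ) (U b y))
          = ((Real.sqrt (lam y) : ℂ) * (Real.sqrt (lam y) : ℂ)) * U a y * (starRingEnd ℂ) (U b y) := by ring
        _ = U a y * (lam y : ℂ) * (starRingEnd ℂ) (U b y) := by rw [hs]; ring
    exact ⟨R, fun _ => inferInstance, fun _ => inferInstance, ψ,
      normalization_of_cond2 htr cond2, cond2⟩

lemma EpTerm_nonneg {ι : Type*} [Fintype ι] [DecidableEq ι]
    {d R : ι → Type*} [∀ i, Fintype (d i)] [∀ i, DecidableEq (d i)]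
    [∀ i, Fintype (R i)] [∀ i, DecidableEq (R i)]
    (ψ : (∀ i, d i × R i) → ℂ) (h1 : ∑ f, Complex.normSq (ψ f) = 1) :
    0 ≤ EpTerm ι d R ψ :=
  Finset.sum_nonneg fun i _ =>
    vN_nonneg_of_psd_trace_one (marg_psd _ _) (marg_trace _ _ h1)


/-- The generalized entanglement of purification is monotone under
discarding subsystems: if `A_i' = A_i ⊗ E_i` for each `i`, then
`E_p(A_1,…,A_n) ≤ E_p(A_1',…,A_n')`, where the state on `⊗_i A_i` is the marginal
(partial trace over `⊗_i E_i`) of the state on `⊗_i A_i'`. -/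
theorem Ep_mono_discard (ι : Type) [Fintype ι] [DecidableEq ι]
    (d E : ι → Type) [∀ i, Fintype (d i)] [∀ i, DecidableEq (d i)]
    [∀ i, Fintype (E i)] [∀ i, DecidableEq (E i)]
    (ρ' : Matrix (∀ i, d i × E i) (∀ i, d i × E i) ℂ)
    (hρ' : ρ'.PosSemidef) (htr : ρ'.trace = 1) :
    Ep ι d (fun a b => ∑ e : ∀ i, E i, ρ' (fun i => (a i, e i)) (fun i => (b i, e i)))
      ≤ Ep ι (fun i => d i × E i) ρ' := by
  classical
  set ρ : Matrix (∀ i, d i) (∀ i, d i) ℂ :=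
    fun a b => ∑ e : ∀ i, E i, ρ' (fun i => (a i, e i)) (fun i => (b i, e i)) with hρdef
  rw [Ep, Ep]
  have hsub : { x | ∃ (R : ι → Type) (fR : ∀ i, Fintype (R i))
      (dR : ∀ i, DecidableEq (R i)) (ψ : (∀ i, (d i × E i) × R i) → ℂ),
        @IsPurification ι _ _ (fun i => d i × E i) R _ _ fR dR ρ' ψ ∧
          x = @EpTerm ι _ _ (fun i => d i × E i) R _ _ fR dR ψ }
      ⊆ { x | ∃ (R : ι → Type) (fR : ∀ i, Fintype (R i))
      (dR : ∀ i, DecidableEq (R i)) (ψ : (∀ i, d i × R i) → ℂ),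
        @IsPurification ι _ _ d R _ _ fR dR ρ ψ ∧
          x = @EpTerm ι _ _ d R _ _ fR dR ψ } := by
    rintro x ⟨R, fR, dR, ψ, hpur, rfl⟩
    letI := fR
    letI := dR
    set ψ' : (∀ i, d i × (E i × R i)) → ℂ :=
      fun f => ψ (fun i => (((f i).1, (f i).2.1), (f i).2.2)) with hψ'
    have hnorm : ∑ f, Complex.normSq (ψ' f) = 1 := by
      refine (Fintype.sum_equiv
        (Equiv.piCongrRight fun i => (Equiv.prodAssoc (d i) (E i) (R i)).symm)
        (fun f => Complex.normSq (ψ' f)) (fun g => Complex.normSq (ψ g))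
        (fun f => rfl)).trans hpur.1
    have hcond2 : ∀ a b, (∑ e : ∀ i, E i × R i,
        ψ' (fun i => (a i, e i)) * (starRingEnd ℂ) (ψ' (fun i => (b i, e i)))) = ρ a b := by
      intro a b
      calc (∑ e : ∀ i, E i × R i,
          ψ' (fun i => (a i, e i)) * (starRingEnd ℂ) (ψ' (fun i => (b i, e i))))
          = ∑ p : (∀ i, E i) × (∀ i, R i),
              ψ (fun i => ((a i, p.1 i), p.2 i)) *
                (starRingEnd ℂ) (ψ (fun i => ((b i, p.1 i), p.2 i))) :=
            Fintype.sum_equiv (piProdEquiv E R) _ _ (fun e => rfl)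
        _ = ∑ e : ∀ i, E i, ∑ r : ∀ i, R i,
              ψ (fun i => ((a i, e i), r i)) *
                (starRingEnd ℂ) (ψ (fun i => ((b i, e i), r i))) := Fintype.sum_prod_type _
        _ = ρ a b := Finset.sum_congr rfl fun e _ =>
              hpur.2 (fun i => (a i, e i)) (fun i => (b i, e i))
    refine ⟨fun i => E i × R i, fun i => inferInstance, fun i => inferInstance, ψ',
      ⟨hnorm, hcond2⟩, ?_⟩
    rw [EpTerm, EpTerm]
    refine Finset.sum_congr rfl fun i _ => ?_
    have hmm : marg {i} (fun f g => ψ' f * (starRingEnd ℂ) (ψ' g))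
        = (marg {i} (fun f g => ψ f * (starRingEnd ℂ) (ψ g))).submatrix
            (Equiv.piCongrRight fun j : {k // k ∈ ({i} : Finset ι)} =>
              (Equiv.prodAssoc (d j.1) (E j.1) (R j.1)).symm)
            (Equiv.piCongrRight fun j : {k // k ∈ ({i} : Finset ι)} =>
              (Equiv.prodAssoc (d j.1) (E j.1) (R j.1)).symm) := by
      ext a b
      simp only [Matrix.submatrix_apply, marg]
      refine Fintype.sum_equiv
        (Equiv.piCongrRight fun j : {k // k ∉ ({i} : Finset ι)} =>
          (Equiv.prodAssoc (d j.1) (E j.1) (R j.1)).symm) _ _ (fun f => ?_)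
      have hfun : ∀ (c : ∀ j : {k // k ∈ ({i} : Finset ι)}, d j.1 × (E j.1 × R j.1)),
          (fun j => ((((merge {i} (fun k => d k × (E k × R k)) c f) j).1,
              ((merge {i} (fun k => d k × (E k × R k)) c f) j).2.1),
              ((merge {i} (fun k => d k × (E k × R k)) c f) j).2.2))
            = merge {i} (fun k => (d k × E k) × R k)
                ((Equiv.piCongrRight fun j : {k // k ∈ ({i} : Finset ι)} =>
                  (Equiv.prodAssoc (d j.1) (E j.1) (R j.1)).symm) c)
                ((Equiv.piCongrRight fun j : {k // k ∉ ({i} : Finset ι)} =>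
                  (Equiv.prodAssoc (d j.1) (E j.1) (R j.1)).symm) f) := by
        intro c
        funext j
        by_cases hj : j ∈ ({i} : Finset ι) <;> simp [merge, hj]
      rw [hψ']
      simp only []
      rw [hfun a, hfun b]
    rw [hmm, vN_submatrix]
  have hne : { x | ∃ (R : ι → Type) (fR : ∀ i, Fintype (R i))
      (dR : ∀ i, DecidableEq (R i)) (ψ : (∀ i, (d i × E i) × R i) → ℂ),
        @IsPurification ι _ _ (fun i => d i × E i) R _ _ fR dR ρ' ψ ∧
          x = @EpTerm ι _ _ (fun i => d i × E i) R _ _ fR dR ψ }.Nonempty := by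
    obtain ⟨R, fR, dR, ψ, hp⟩ := exists_purification ι (fun i => d i × E i) ρ' hρ' htr
    exact ⟨_, R, fR, dR, ψ, hp, rfl⟩
  have hbdd : BddBelow { x | ∃ (R : ι → Type) (fR : ∀ i, Fintype (R i))
      (dR : ∀ i, DecidableEq (R i)) (ψ : (∀ i, d i × R i) → ℂ),
        @IsPurification ι _ _ d R _ _ fR dR ρ ψ ∧
          x = @EpTerm ι _ _ d R _ _ fR dR ψ } := by
    refine ⟨0, ?_⟩
    rintro x ⟨R, fR, dR, ψ, hpur, rfl⟩
    letI := fR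
    letI := dR
    exact EpTerm_nonneg ψ hpur.1
  exact mul_le_mul_of_nonneg_left (csInf_le_csInf hbdd hne hsub) (by norm_num)

end
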